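/- For the Dirichlet–Laplace prior with parameter a ∈ (0, 1), p ≥ 2 and τ = 1, the marginal density of a single coordinate has a pole at zero: with φ1 ~ Beta(a, (p − 1)a) (the first coordinate of a Dir(a, …, a) vector) and θ | φ1 distributed Laplace with scale φ1 (density x ↦ (2φ1)^{−1} e^{−|x|/φ1}), the marginal density m(x) = ∫_0^1 (2φ)^{−1} e^{−|x|/φ} · [B(a, (p−1)a)]^{−1} φ^{a−1} (1−φ)^{(p−1)a−1} dφ satisfies m(x) → ∞ as x → 0. -/

import Mathlib

open Filter

/-- The marginal density of one coordinate of the Dirichlet–Laplace prior with parameter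
`a`, `p` coordinates and `τ = 1`: the mixing weight `φ ~ Beta(a, (p-1)a)` and
`θ | φ ~ Lap(φ)` with density `x ↦ (2φ)⁻¹ e^{-|x|/φ}`.  Here the Beta normalizing constant
is written as `Γ(a)Γ((p-1)a)/Γ(pa)`. -/
noncomputable def dlMarginal (a : ℝ) (p : ℕ) (x : ℝ) : ℝ :=
  ∫ φ in Set.Ioo (0 : ℝ) 1,
    (2 * φ)⁻¹ * Real.exp (-|x| / φ) *
      ((Real.Gamma a * Real.Gamma (((p : ℝ) - 1) * a) /
          Real.Gamma (a + ((p : ℝ) - 1) * a))⁻¹ *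
        φ ^ (a - 1) * (1 - φ) ^ (((p : ℝ) - 1) * a - 1))

open MeasureTheory Set Real in
/-- Integrability of the Beta-type integrand `φ^(a-1)(1-φ)^(b-1)` on `(0,1)`. -/
lemma betaAux_integrable {a b : ℝ} (ha : 0 < a) (hb : 0 < b) :
    IntegrableOn (fun φ : ℝ => φ ^ (a - 1) * (1 - φ) ^ (b - 1)) (Ioo 0 1) := by
  have h1 : IntegrableOn (fun φ : ℝ => φ ^ (a - 1)) (Ioc (0:ℝ) (1/2)) := by
    have := intervalIntegral.intervalIntegrable_rpow' (a := (0:ℝ)) (b := 1/2)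
      (r := a - 1) (by linarith)
    rw [intervalIntegrable_iff_integrableOn_Ioc_of_le (by norm_num)] at this
    exact this
  have h2 : IntegrableOn (fun φ : ℝ => (1 - φ) ^ (b - 1)) (Ioo (1/2 : ℝ) 1) := by
    have := (intervalIntegral.intervalIntegrable_rpow' (a := (0:ℝ)) (b := 1/2)
      (r := b - 1) (by linarith)).comp_sub_left 1
    norm_num at this
    replace this := this.symm
    rw [intervalIntegrable_iff_integrableOn_Ioc_of_le (by norm_num)] at this
    exact this.mono_set Ioo_subset_Ioc_self
  have key : IntegrableOn (fun φ : ℝ => φ ^ (a - 1) * (1 - φ) ^ (b - 1))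
      (Ioc (0:ℝ) (1/2) ∪ Ioo (1/2 : ℝ) 1) := by
    apply IntegrableOn.union
    · -- on (0, 1/2], bound `(1-φ)^(b-1)` by a constant
      apply Integrable.mono' (h1.const_mul (max 1 ((1/2 : ℝ) ^ (b - 1))))
      · apply ContinuousOn.aestronglyMeasurable _ measurableSet_Ioc
        apply ContinuousOn.mul
        · exact continuousOn_id.rpow_const fun x hx => Or.inl (ne_of_gt hx.1)
        · exact (continuousOn_const.sub continuousOn_id).rpow_const
            fun x hx => Or.inl (by simp only [Pi.sub_apply, id]; intro h; nlinarith [hx.1, hx.2])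
      · rw [ae_restrict_iff' measurableSet_Ioc]
        filter_upwards with φ hφ
        have hφ0 : 0 < φ := hφ.1
        have h1φ : (1:ℝ)/2 ≤ 1 - φ := by linarith [hφ.2]
        have h1φ' : (0:ℝ) < 1 - φ := by linarith
        rw [norm_mul, norm_of_nonneg (rpow_nonneg hφ0.le _),
          norm_of_nonneg (rpow_nonneg h1φ'.le _), mul_comm]
        apply mul_le_mul_of_nonneg_right _ (rpow_nonneg hφ0.le _)
        rcases le_or_gt 0 (b - 1) with hb1 | hb1
        · exact le_trans (rpow_le_one h1φ'.le (by linarith) hb1) (le_max_left _ _)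
        · exact le_trans (rpow_le_rpow_of_nonpos (by norm_num) h1φ hb1.le) (le_max_right _ _)
    · -- on (1/2, 1), bound `φ^(a-1)` by a constant
      apply Integrable.mono' (h2.const_mul (max 1 ((1/2 : ℝ) ^ (a - 1))))
      · apply ContinuousOn.aestronglyMeasurable _ measurableSet_Ioo
        apply ContinuousOn.mul
        · exact continuousOn_id.rpow_const fun x hx =>
            Or.inl (by simp only [id]; intro h; rw [h] at hx; norm_num at hx)
        · exact (continuousOn_const.sub continuousOn_id).rpow_const
            fun x hx => Or.inl (by simp only [Pi.sub_apply, id]; intro h; nlinarith [hx.2])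
      · rw [ae_restrict_iff' measurableSet_Ioo]
        filter_upwards with φ hφ
        have hφ0 : (1:ℝ)/2 ≤ φ := hφ.1.le
        have hφ0' : (0:ℝ) < φ := by linarith
        have h1φ' : (0:ℝ) < 1 - φ := by linarith [hφ.2]
        rw [norm_mul, norm_of_nonneg (rpow_nonneg hφ0'.le _),
          norm_of_nonneg (rpow_nonneg h1φ'.le _)]
        apply mul_le_mul_of_nonneg_right _ (rpow_nonneg h1φ'.le _)
        rcases le_or_gt 0 (a - 1) with ha1 | ha1
        · exact le_trans (rpow_le_one hφ0'.le (by linarith [hφ.2]) ha1) (le_max_left _ _)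
        · exact le_trans (rpow_le_rpow_of_nonpos (by norm_num) hφ0 ha1.le) (le_max_right _ _)
  exact key.mono_set (fun x hx => by
    rcases le_or_gt x (1/2) with h | h
    · exact Or.inl ⟨hx.1, h⟩
    · exact Or.inr ⟨h, hx.2⟩)

/-- For the Dirichlet–Laplace prior with `a ∈ (0,1)`, `p ≥ 2`, `τ = 1`, the marginal
density of a single coordinate has a pole at zero: `m(x) → ∞` as `x → 0`. -/
theorem statement11 (a : ℝ) (ha0 : 0 < a) (ha1 : a < 1) (p : ℕ) (hp : 2 ≤ p) :
    Tendsto (dlMarginal a p) (nhdsWithin 0 {x : ℝ | x ≠ 0}) atTop := by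
  classical
  open MeasureTheory Set Real in
  set b : ℝ := ((p : ℝ) - 1) * a with hbdef
  have hp1 : (1:ℝ) ≤ (p:ℝ) - 1 := by
    have : (2:ℝ) ≤ (p:ℝ) := by exact_mod_cast hp
    linarith
  have hb : 0 < b := by positivity
  set C : ℝ := Real.Gamma a * Real.Gamma b / Real.Gamma (a + b) with hCdef
  have hC : 0 < C := by
    apply div_pos (mul_pos (Real.Gamma_pos_of_pos ha0) (Real.Gamma_pos_of_pos hb))
      (Real.Gamma_pos_of_pos (by linarith))
  set g : ℝ → ℝ → ℝ := fun x φ =>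
    (2 * φ)⁻¹ * Real.exp (-|x| / φ) * (C⁻¹ * φ ^ (a - 1) * (1 - φ) ^ (b - 1)) with hgdef
  have hdl : ∀ x, dlMarginal a p x = ∫ φ in Set.Ioo (0:ℝ) 1, g x φ := fun x => rfl
  -- integrability of the full integrand for x ≠ 0
  have hInt : ∀ x : ℝ, x ≠ 0 → IntegrableOn (g x) (Set.Ioo 0 1) := by
    intro x hx
    have hx0 : 0 < |x| := abs_pos.mpr hx
    apply Integrable.mono' ((betaAux_integrable ha0 hb).const_mul ((2*|x|)⁻¹ * C⁻¹))
    · apply ContinuousOn.aestronglyMeasurable _ measurableSet_Ioo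
      apply ContinuousOn.mul
      · apply ContinuousOn.mul
        · exact ((continuous_const.mul continuous_id).continuousOn).inv₀
            fun φ hφ => by exact ne_of_gt (by linarith [hφ.1] : (0:ℝ) < 2 * φ)
        · exact Real.continuous_exp.comp_continuousOn
            (continuousOn_const.div continuousOn_id fun φ hφ => ne_of_gt hφ.1)
      · apply ContinuousOn.mul
        · exact continuousOn_const.mul
            (continuousOn_id.rpow_const fun φ hφ => Or.inl (ne_of_gt hφ.1))
        · exact (continuousOn_const.sub continuousOn_id).rpow_const
            fun φ hφ => Or.inl (by simp only [Pi.sub_apply, id]; intro h; nlinarith [hφ.2])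
    · rw [ae_restrict_iff' measurableSet_Ioo]
      filter_upwards with φ hφ
      have hφ0 : (0:ℝ) < φ := hφ.1
      have h1φ : (0:ℝ) < 1 - φ := by linarith [hφ.2]
      have hexp : Real.exp (-|x| / φ) ≤ φ / |x| := by
        rw [neg_div, Real.exp_neg]
        rw [inv_le_comm₀ (Real.exp_pos _) (by positivity)]
        calc (φ / |x|)⁻¹ = |x| / φ := by rw [inv_div]
        _ ≤ Real.exp (|x| / φ) := by
            have := Real.add_one_le_exp (|x| / φ); linarith
      have key : (2 * φ)⁻¹ * Real.exp (-|x| / φ) ≤ (2 * |x|)⁻¹ := by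
        calc (2 * φ)⁻¹ * Real.exp (-|x| / φ) ≤ (2 * φ)⁻¹ * (φ / |x|) :=
              mul_le_mul_of_nonneg_left hexp (by positivity)
        _ = (2 * |x|)⁻¹ := by field_simp
      have hgn : 0 ≤ g x φ := by
        apply mul_nonneg (mul_nonneg (by positivity) (Real.exp_pos _).le)
        positivity
      rw [Real.norm_of_nonneg hgn, hgdef]
      calc (2 * φ)⁻¹ * Real.exp (-|x| / φ) * (C⁻¹ * φ ^ (a - 1) * (1 - φ) ^ (b - 1))
          ≤ (2 * |x|)⁻¹ * (C⁻¹ * φ ^ (a - 1) * (1 - φ) ^ (b - 1)) := by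
            apply mul_le_mul_of_nonneg_right key
            positivity
      _ = (2*|x|)⁻¹ * C⁻¹ * (φ ^ (a - 1) * (1 - φ) ^ (b - 1)) := by ring
  -- constants
  set c : ℝ := min ((1/2 : ℝ) ^ (b - 1)) 1 with hcdef
  have hc : 0 < c := lt_min (Real.rpow_pos_of_pos (by norm_num) _) one_pos
  set K : ℝ := 2⁻¹ * Real.exp (-1) * (C⁻¹ * c) with hKdef
  have hK : 0 < K := by positivity
  set F : ℝ → ℝ := fun t => K * ((t ^ (a-1) - (1/2 : ℝ) ^ (a-1)) / (1-a)) with hFdef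
  -- lower bound
  have hlow : ∀ x : ℝ, x ≠ 0 → |x| < 1/2 → F |x| ≤ dlMarginal a p x := by
    intro x hx hx2
    set t : ℝ := |x| with htdef
    have ht0 : 0 < t := abs_pos.mpr hx
    have hsub : Set.Ioo t (1/2 : ℝ) ⊆ Set.Ioo (0:ℝ) 1 :=
      fun φ hφ => ⟨lt_trans ht0 hφ.1, by linarith [hφ.2]⟩
    -- pointwise lower bound on Ioo t (1/2)
    have hpt : ∀ φ ∈ Set.Ioo t (1/2 : ℝ), K * φ ^ (a - 2) ≤ g x φ := by
      intro φ hφ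
      have hφ0 : 0 < φ := lt_trans ht0 hφ.1
      have hφ2 : φ < 1/2 := hφ.2
      have h1φ : (1:ℝ)/2 ≤ 1 - φ := by linarith
      have h1φ' : (0:ℝ) < 1 - φ := by linarith
      have hexp : Real.exp (-1 : ℝ) ≤ Real.exp (-t / φ) := by
        apply Real.exp_le_exp.mpr
        rw [neg_div, neg_le_neg_iff]
        rw [div_le_one hφ0]
        exact hφ.1.le
      have hcb : c ≤ (1 - φ) ^ (b - 1) := by
        rcases le_or_gt 0 (b - 1) with hb1 | hb1
        · exact le_trans (min_le_left _ _) (Real.rpow_le_rpow (by norm_num) h1φ hb1)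
        · exact le_trans (min_le_right _ _)
            (Real.one_le_rpow_of_pos_of_le_one_of_nonpos h1φ' (by linarith) hb1.le)
      have step : (2 * φ)⁻¹ * Real.exp (-1) * (C⁻¹ * φ ^ (a - 1) * c) ≤ g x φ := by
        rw [hgdef]
        apply mul_le_mul
        · exact mul_le_mul_of_nonneg_left hexp (by positivity)
        · exact mul_le_mul_of_nonneg_left hcb (by positivity)
        · positivity
        · apply mul_nonneg (by positivity) (Real.exp_pos _).le
      refine le_trans (le_of_eq ?_) step
      have hpow : φ ^ (a - 1) = φ * φ ^ (a - 2) := by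
        rw [show a - 1 = 1 + (a - 2) by ring, Real.rpow_add hφ0, Real.rpow_one]
      rw [hpow, hKdef]
      field_simp
    -- integrability on the small interval
    have hint1 : IntegrableOn (fun φ : ℝ => K * φ ^ (a - 2)) (Set.Ioo t (1/2 : ℝ)) := by
      apply (ContinuousOn.integrableOn_Icc ?_).mono_set Set.Ioo_subset_Icc_self
      exact continuousOn_const.mul (continuousOn_id.rpow_const
        fun φ hφ => Or.inl (ne_of_gt (lt_of_lt_of_le ht0 hφ.1)))
    have hint2 : IntegrableOn (g x) (Set.Ioo t (1/2 : ℝ)) := (hInt x hx).mono_set hsub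
    have hA : (∫ φ in Set.Ioo t (1/2 : ℝ), K * φ ^ (a - 2))
        ≤ ∫ φ in Set.Ioo t (1/2 : ℝ), g x φ :=
      setIntegral_mono_on hint1 hint2 measurableSet_Ioo hpt
    have hgnn : 0 ≤ᵐ[volume.restrict (Set.Ioo (0:ℝ) 1)] g x := by
      refine (ae_restrict_iff' measurableSet_Ioo).mpr ?_
      filter_upwards with φ hφ
      have hφ0 : (0:ℝ) < φ := hφ.1
      have h1φ : (0:ℝ) < 1 - φ := by linarith [hφ.2]
      apply mul_nonneg (mul_nonneg (by positivity) (Real.exp_pos _).le)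
      positivity
    have hB : (∫ φ in Set.Ioo t (1/2 : ℝ), g x φ) ≤ ∫ φ in Set.Ioo (0:ℝ) 1, g x φ :=
      setIntegral_mono_set (hInt x hx) hgnn (HasSubset.Subset.eventuallyLE hsub)
    have hval : (∫ φ in Set.Ioo t (1/2 : ℝ), K * φ ^ (a - 2)) = F t := by
      rw [integral_const_mul]
      rw [← integral_Ioc_eq_integral_Ioo,
        ← intervalIntegral.integral_of_le (le_of_lt hx2)]
      rw [integral_rpow (Or.inr ⟨by intro h; linarith [h],
        Set.notMem_uIcc_of_lt ht0 (by norm_num)⟩)]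
      rw [hFdef]
      have h1 : a - 2 + 1 = a - 1 := by ring
      rw [h1]
      congr 1
      rw [div_eq_div_iff (by linarith) (by linarith : (1:ℝ) - a ≠ 0)]
      ring
    rw [hdl x, ← hval]
    exact le_trans hA hB
  -- divergence of the lower bound
  have hF : Tendsto (fun x : ℝ => F |x|) (nhdsWithin 0 {x : ℝ | x ≠ 0}) atTop := by
    have h1 : Tendsto (fun t : ℝ => t ^ (a-1)) (nhdsWithin 0 (Set.Ioi 0)) atTop := by
      have h2 := (tendsto_rpow_atTop (y := 1-a) (by linarith)).comp tendsto_inv_nhdsGT_zero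
      refine h2.congr' ?_
      filter_upwards [self_mem_nhdsWithin] with t ht
      have ht' : (0:ℝ) < t := ht
      simp only [Function.comp_apply]
      rw [Real.inv_rpow ht'.le, ← Real.rpow_neg ht'.le, neg_sub]
    have h3 : Tendsto F (nhdsWithin 0 (Set.Ioi 0)) atTop := by
      rw [hFdef]
      apply Tendsto.const_mul_atTop hK
      apply Tendsto.atTop_div_const (by linarith : (0:ℝ) < 1 - a)
      exact tendsto_atTop_add_const_right _ _ h1
    exact h3.comp tendsto_abs_nhdsNE_zero
  refine tendsto_atTop_mono' _ ?_ hF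
  filter_upwards [self_mem_nhdsWithin,
    eventually_nhdsWithin_of_eventually_nhds
      (eventually_abs_sub_lt 0 (by norm_num : (0:ℝ) < 1/2))] with x hx hx2
  exact hlow x hx (by simpa using hx2)
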